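/- arXiv:2003.02147 — 2 statements merged into one kernel-verified Lean document; each statement's English description precedes it below -/
import Mathlib

section
/- Let a < b be real numbers, μ ∈ ℝ, r₀ > 0, 0 < c₀ ≤ C₁. Let R : [a,b] → ℝ be C¹ with R(z) ≥ r₀ for all z; let V : [a,b] → ℝ be C¹ with c₀ ≤ V(z) − μ + 1 ≤ C₁ for all z; and let q : [a,b] → ℝ be continuous. Then there exists D > 0, depending only on r₀, c₀, C₁, sup|R'|, sup|V'| and sup|q|, such that for every ε ∈ (0,1] and every C² function φ : [a,b] → ℂ satisfying −ε² (R(z) φ'(z))'/R(z) + (V(z) + ε q(z)) φ(z) = μ φ(z) on [a,b], the energy E(z) := ε² |φ'(z)|² + (V(z) − μ + 1) |φ(z)|² satisfies E(s) ≤ exp( (D/ε) |s − t| ) · E(t) for all s, t ∈ [a,b]. -/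
open MeasureTheory

section GronAux

private lemma gron_fwd {f f' : ℝ → ℝ} {K a b : ℝ}
    (hd : ∀ x ∈ Set.Icc a b, HasDerivWithinAt f (f' x) (Set.Icc a b) x)
    (hbound : ∀ x ∈ Set.Icc a b, |f' x| ≤ K * f x)
    (hpos : ∀ x ∈ Set.Icc a b, 0 ≤ f x) :
    ∀ t ∈ Set.Icc a b, ∀ s ∈ Set.Icc a b, t ≤ s → f s ≤ Real.exp (K * (s - t)) * f t := by
  intro t ht s hs hts
  have hsub : Set.Icc t s ⊆ Set.Icc a b := Set.Icc_subset_Icc ht.1 hs.2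
  have hcont : ContinuousOn f (Set.Icc t s) :=
    ContinuousOn.mono (fun x hx => (hd x hx).continuousWithinAt) hsub
  have hderiv : ∀ x ∈ Set.Ico t s, HasDerivWithinAt f (f' x) (Set.Ici x) x := by
    intro x hx
    have hxab : x ∈ Set.Icc a b := hsub ⟨hx.1, hx.2.le⟩
    refine (hd x hxab).mono_of_mem_nhdsWithin ?_
    refine mem_nhdsWithin.2 ⟨Set.Iio b, isOpen_Iio, lt_of_lt_of_le hx.2 hs.2, ?_⟩
    rintro y ⟨hy1, hy2⟩
    exact ⟨le_trans hxab.1 hy2, le_of_lt hy1⟩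
  have bound : ∀ x ∈ Set.Ico t s, ‖f' x‖ ≤ K * ‖f x‖ + 0 := by
    intro x hx
    have hxab : x ∈ Set.Icc a b := hsub ⟨hx.1, hx.2.le⟩
    rw [Real.norm_eq_abs, Real.norm_eq_abs, abs_of_nonneg (hpos x hxab), add_zero]
    exact hbound x hxab
  have := norm_le_gronwallBound_of_norm_deriv_right_le hcont hderiv le_rfl bound s
    (Set.right_mem_Icc.2 hts)
  rw [gronwallBound_ε0, Real.norm_eq_abs, Real.norm_eq_abs,
    abs_of_nonneg (hpos s hs), abs_of_nonneg (hpos t ht), mul_comm] at this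
  exact this

private lemma gron_two {f f' : ℝ → ℝ} {K a b : ℝ}
    (hd : ∀ x ∈ Set.Icc a b, HasDerivWithinAt f (f' x) (Set.Icc a b) x)
    (hbound : ∀ x ∈ Set.Icc a b, |f' x| ≤ K * f x)
    (hpos : ∀ x ∈ Set.Icc a b, 0 ≤ f x) :
    ∀ s ∈ Set.Icc a b, ∀ t ∈ Set.Icc a b, f s ≤ Real.exp (K * |s - t|) * f t := by
  intro s hs t ht
  rcases le_total t s with h | h
  · rw [abs_of_nonneg (by linarith)]
    exact gron_fwd hd hbound hpos t ht s hs h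
  · rw [abs_of_nonpos (by linarith)]
    set ι : ℝ → ℝ := fun x => a + b - x with hι
    have hmaps : Set.MapsTo ι (Set.Icc a b) (Set.Icc a b) := by
      rintro x ⟨h1, h2⟩; exact ⟨by simp [hι]; linarith, by simp [hι]; linarith⟩
    have hιd : ∀ x, HasDerivWithinAt ι (-1) (Set.Icc a b) x := by
      intro x
      exact (hasDerivWithinAt_id x (Set.Icc a b)).const_sub (a+b)
    have hgd : ∀ x ∈ Set.Icc a b, HasDerivWithinAt (f ∘ ι) (-(f' (ι x))) (Set.Icc a b) x := by
      intro x hx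
      have := (hd (ι x) (hmaps hx)).comp x (hιd x) hmaps
      simpa [mul_comm] using this
    have hgb : ∀ x ∈ Set.Icc a b, |(-(f' (ι x)))| ≤ K * (f ∘ ι) x := by
      intro x hx
      simpa using hbound (ι x) (hmaps hx)
    have hgp : ∀ x ∈ Set.Icc a b, 0 ≤ (f ∘ ι) x := fun x hx => hpos (ι x) (hmaps hx)
    have key := gron_fwd hgd hgb hgp (ι t) (hmaps ht) (ι s) (hmaps hs) (by simp [hι]; linarith)
    simp only [Function.comp, hι] at key
    have heq : (a + b - s) - (a + b - t) = -(s - t) := by ring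
    rw [heq] at key
    convert key using 3 <;> ring

private lemma dnsq {a b : ℝ} {ψ ψ' : ℝ → ℂ}
    (h : ∀ z ∈ Set.Icc a b, HasDerivWithinAt ψ (ψ' z) (Set.Icc a b) z) :
    ∀ z ∈ Set.Icc a b, HasDerivWithinAt (fun z => (ψ z).re^2 + (ψ z).im^2)
      (2*(ψ z).re*(ψ' z).re + 2*(ψ z).im*(ψ' z).im) (Set.Icc a b) z := by
  intro z hz
  have hre : HasDerivWithinAt (fun z => (ψ z).re) ((ψ' z).re) (Set.Icc a b) z := by
    simpa [Function.comp_def] using (Complex.reCLM.hasFDerivAt (x := ψ z)).comp_hasDerivWithinAt z (h z hz)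
  have him : HasDerivWithinAt (fun z => (ψ z).im) ((ψ' z).im) (Set.Icc a b) z := by
    simpa [Function.comp_def] using (Complex.imCLM.hasFDerivAt (x := ψ z)).comp_hasDerivWithinAt z (h z hz)
  have h2 := (hre.mul hre).add (him.mul him)
  have e : (fun z => (ψ z).re^2 + (ψ z).im^2) = ((fun z => (ψ z).re) * fun z => (ψ z).re) + (fun z => (ψ z).im) * fun z => (ψ z).im := by
    funext x; simp only [Pi.add_apply, Pi.mul_apply]; ring
  rw [e]; exact h2.congr_deriv (by ring)

set_option maxHeartbeats 1000000 in
private lemma bnd (ε c₀ C₁ β γ MV MQ Vz V'z ρ qz μ u v p m : ℝ)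
    (hε : 0 < ε) (hε1 : ε ≤ 1) (hc₀ : 0 < c₀)
    (hV1 : c₀ ≤ Vz - μ + 1) (hV2 : Vz - μ + 1 ≤ C₁)
    (hq : |qz| ≤ MQ) (hρ : |ρ| ≤ β) (hV' : |V'z| ≤ MV)
    (hγ : c₀ * γ = 1) (hγ0 : 0 ≤ γ) :
    |2*(Vz-μ+ε*qz)*(u*p+v*m) - 2*ε^2*ρ*(p^2+m^2) + (V'z*(u^2+v^2)
      + (Vz-μ+1)*(2*u*p+2*v*m))|
      ≤ (((2*C₁+1+MQ)*(1+γ) + 2*β + MV*γ + 1)/ε)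
          * (ε^2*(p^2+m^2) + (Vz-μ+1)*(u^2+v^2)) := by
  set A := u^2+v^2 with hA'
  set B := p^2+m^2 with hB'
  set E := ε^2*B + (Vz-μ+1)*A with hE'
  set M := 2*C₁+1+MQ with hM'
  have hMQ : 0 ≤ MQ := le_trans (abs_nonneg _) hq
  have hβ0 : 0 ≤ β := le_trans (abs_nonneg _) hρ
  have hMV : 0 ≤ MV := le_trans (abs_nonneg _) hV'
  have hM0 : 0 < M := by have := hc₀.trans_le (hV1.trans hV2); simp only [hM']; linarith
  have hA : 0 ≤ A := by positivity
  have hB : 0 ≤ B := by positivity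
  have hVp : 0 ≤ Vz - μ + 1 := by linarith
  have hεB : 0 ≤ ε^2*B := by positivity
  have hVA : 0 ≤ (Vz-μ+1)*A := mul_nonneg hVp hA
  have hE : 0 ≤ E := by simp only [hE']; linarith
  have hAγ : A ≤ γ * E := by
    have h0 : c₀ * A ≤ E := by
      have := mul_le_mul_of_nonneg_right hV1 hA
      simp only [hE']; linarith
    calc A = γ * (c₀ * A) := by rw [← mul_assoc, mul_comm γ c₀, hγ, one_mul]
      _ ≤ γ * E := by exact mul_le_mul_of_nonneg_left h0 hγ0
  have hBE : ε^2 * B ≤ E := by simp only [hE']; linarith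
  have h1a : 2*ε*(u*p) ≤ ε^2*p^2 + u^2 := by nlinarith [sq_nonneg (ε*p - u)]
  have h1b : -(ε^2*p^2 + u^2) ≤ 2*ε*(u*p) := by nlinarith [sq_nonneg (ε*p + u)]
  have h1c : 2*ε*(v*m) ≤ ε^2*m^2 + v^2 := by nlinarith [sq_nonneg (ε*m - v)]
  have h1d : -(ε^2*m^2 + v^2) ≤ 2*ε*(v*m) := by nlinarith [sq_nonneg (ε*m + v)]
  have h1 : 2*ε*|u*p+v*m| ≤ ε^2*B + A := by
    rcases abs_cases (u*p+v*m) with ⟨h, _⟩ | ⟨h, _⟩ <;> rw [h] <;>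
      simp only [hA', hB'] <;> nlinarith
  have hc : |2*(Vz-μ+ε*qz) + 2*(Vz-μ+1)| ≤ 2*M := by
    have h2 := abs_le.1 hq
    have h3 : ε*qz ≤ MQ := by nlinarith
    have h4 : -MQ ≤ ε*qz := by nlinarith
    rw [abs_le]; constructor <;> simp only [hM'] <;> linarith
  have hsplit : |2*(Vz-μ+ε*qz)*(u*p+v*m) - 2*ε^2*ρ*B + (V'z*A + (Vz-μ+1)*(2*u*p+2*v*m))|
      ≤ 2*M * |u*p+v*m| + (2*ε^2*β*B + MV*A) := by
    have e1 : 2*(Vz-μ+ε*qz)*(u*p+v*m) - 2*ε^2*ρ*B + (V'z*A + (Vz-μ+1)*(2*u*p+2*v*m))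
        = (2*(Vz-μ+ε*qz) + 2*(Vz-μ+1))*(u*p+v*m) + ((-(2*ε^2*ρ))*B + V'z*A) := by ring
    rw [e1]
    refine le_trans (abs_add_le _ _) (add_le_add ?_ ?_)
    · rw [abs_mul]
      exact mul_le_mul_of_nonneg_right hc (abs_nonneg _)
    · refine le_trans (abs_add_le _ _) (add_le_add ?_ ?_)
      · rw [abs_mul, abs_neg, abs_of_nonneg hB, abs_mul,
          abs_of_nonneg (by positivity : (0:ℝ) ≤ 2*ε^2)]
        exact mul_le_mul_of_nonneg_right (mul_le_mul_of_nonneg_left hρ (by positivity)) hB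
      · rw [abs_mul, abs_of_nonneg hA]
        exact mul_le_mul_of_nonneg_right hV' hA
  rw [div_mul_eq_mul_div, le_div_iff₀ hε]
  refine le_trans (mul_le_mul_of_nonneg_right hsplit hε.le) ?_
  have q1 : M*(2*ε*|u*p+v*m|) ≤ M*(ε^2*B + A) := mul_le_mul_of_nonneg_left h1 hM0.le
  have q2 : M*(ε^2*B) ≤ M*E := mul_le_mul_of_nonneg_left hBE hM0.le
  have q3 : M*A ≤ M*(γ*E) := mul_le_mul_of_nonneg_left hAγ hM0.le
  have q4a : ε*(ε^2*B) ≤ E := by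
    nlinarith [mul_nonneg (by linarith : (0:ℝ) ≤ 1-ε) (by positivity : (0:ℝ) ≤ ε^2*B)]
  have q4 : (2*β)*(ε*(ε^2*B)) ≤ (2*β)*E := mul_le_mul_of_nonneg_left q4a (by positivity)
  have q5a : MV*A*ε ≤ MV*A := by nlinarith [mul_nonneg hMV hA]
  have q5 : MV*A ≤ MV*(γ*E) := mul_le_mul_of_nonneg_left hAγ hMV
  have e2 : (2*M * |u*p+v*m| + (2*ε^2*β*B + MV*A))*ε
      = M*(2*ε*|u*p+v*m|) + (2*β)*(ε*(ε^2*B)) + MV*A*ε := by ring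
  have e3 : (M*(1+γ) + 2*β + MV*γ + 1)*E = M*E + M*(γ*E) + (2*β)*E + MV*(γ*E) + E := by ring
  have q1' : M*(2*ε*|u*p+v*m|) ≤ M*(ε^2*B) + M*A := by rw [← mul_add]; exact q1
  rw [e2, e3]
  linarith [q1', q2, q3, q4, q5a, q5, hE]

end GronAux

/-- Lemma 4.8 (Gronwallgene, single-solution form): a rough Grönwall estimate
`E(s) ≤ exp((D/ε)|s - t|) E(t)` for the energy density
`E = ε²|φ'|² + (V - μ + 1)|φ|²` of eigenfunctions of the 1D semiclassical
operator, valid across the potential minimum, with `D` independent of `ε ∈ (0,1]`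
and of the eigenfunction. -/
theorem stmt15 (a b : ℝ) (hab : a < b) (μ r₀ c₀ C₁ : ℝ)
    (hr₀ : 0 < r₀) (hc₀ : 0 < c₀) (hc₀C₁ : c₀ ≤ C₁)
    (R R' V V' q : ℝ → ℝ)
    (hR : ∀ z ∈ Set.Icc a b, HasDerivWithinAt R (R' z) (Set.Icc a b) z)
    (hR' : ContinuousOn R' (Set.Icc a b))
    (hRpos : ∀ z ∈ Set.Icc a b, r₀ ≤ R z)
    (hV : ∀ z ∈ Set.Icc a b, HasDerivWithinAt V (V' z) (Set.Icc a b) z)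
    (hV' : ContinuousOn V' (Set.Icc a b))
    (hVbnd : ∀ z ∈ Set.Icc a b, c₀ ≤ V z - μ + 1 ∧ V z - μ + 1 ≤ C₁)
    (hq : ContinuousOn q (Set.Icc a b)) :
    ∃ D > 0, ∀ ε ∈ Set.Ioc (0:ℝ) 1, ∀ φ φ' φ'' : ℝ → ℂ,
      (∀ z ∈ Set.Icc a b, HasDerivWithinAt φ (φ' z) (Set.Icc a b) z) →
      (∀ z ∈ Set.Icc a b, HasDerivWithinAt φ' (φ'' z) (Set.Icc a b) z) →
      ContinuousOn φ'' (Set.Icc a b) →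
      (∀ z ∈ Set.Icc a b,
        -(ε:ℂ)^2 * (((R' z : ℂ) * φ' z + (R z : ℂ) * φ'' z) / (R z : ℂ))
          + ((V z : ℂ) + (ε:ℂ) * (q z : ℂ)) * φ z = (μ:ℂ) * φ z) →
      ∀ s ∈ Set.Icc a b, ∀ t ∈ Set.Icc a b,
        ε^2 * ‖φ' s‖^2 + (V s - μ + 1) * ‖φ s‖^2 ≤
          Real.exp ((D/ε) * |s - t|) *
            (ε^2 * ‖φ' t‖^2 + (V t - μ + 1) * ‖φ t‖^2) := by
  have hane : a ∈ Set.Icc a b := ⟨le_refl a, hab.le⟩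
  obtain ⟨MR, hMR⟩ := IsCompact.exists_bound_of_continuousOn isCompact_Icc hR'
  obtain ⟨MV, hMVb⟩ := IsCompact.exists_bound_of_continuousOn isCompact_Icc hV'
  obtain ⟨MQ, hMQb⟩ := IsCompact.exists_bound_of_continuousOn isCompact_Icc hq
  simp only [Real.norm_eq_abs] at hMR hMVb hMQb
  have hMR0 : 0 ≤ MR := le_trans (abs_nonneg _) (hMR a hane)
  have hMV0 : 0 ≤ MV := le_trans (abs_nonneg _) (hMVb a hane)
  have hMQ0 : 0 ≤ MQ := le_trans (abs_nonneg _) (hMQb a hane)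
  set γ : ℝ := 1/c₀ with hγ'
  set β : ℝ := MR/r₀ with hβ'
  have hγ0 : 0 ≤ γ := by positivity
  have hβ0 : 0 ≤ β := by positivity
  have hγc : c₀ * γ = 1 := by rw [hγ', mul_one_div_cancel hc₀.ne']
  refine ⟨(2*C₁+1+MQ)*(1+γ) + 2*β + MV*γ + 1, ?_, ?_⟩
  · have hC₁ : 0 < C₁ := lt_of_lt_of_le hc₀ hc₀C₁
    have : 0 < (2*C₁+1+MQ) := by linarith
    nlinarith [mul_nonneg hMV0 hγ0, mul_nonneg this.le hγ0]
  set D : ℝ := (2*C₁+1+MQ)*(1+γ) + 2*β + MV*γ + 1 with hD'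
  rintro ε ⟨hε0, hε1⟩ φ φ' φ'' hφ hφ' hφ''c hODE s hs t ht
  -- real form of the ODE
  have hkey : ∀ z ∈ Set.Icc a b,
      ε^2 * (φ'' z).re = (V z - μ + ε*q z) * (φ z).re - ε^2*(R' z/R z)*(φ' z).re ∧
      ε^2 * (φ'' z).im = (V z - μ + ε*q z) * (φ z).im - ε^2*(R' z/R z)*(φ' z).im := by
    intro z hz
    have hRz0 : (0:ℝ) < R z := lt_of_lt_of_le hr₀ (hRpos z hz)
    have hRz : ((R z : ℝ):ℂ) ≠ 0 := by exact_mod_cast hRz0.ne'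
    have h := hODE z hz
    have key : (↑(ε^2) : ℂ) * φ'' z = (↑(V z - μ + ε*q z) : ℂ) * φ z
        - (↑(ε^2*(R' z/R z)) : ℂ) * φ' z := by
      have hdiv : ((R' z:ℂ) * φ' z + (R z:ℂ) * φ'' z) / (R z:ℂ) = (R' z:ℂ)/(R z:ℂ) * φ' z + φ'' z := by
        rw [add_div, mul_div_right_comm, mul_div_cancel_left₀ _ hRz]
      push_cast
      rw [hdiv] at h
      linear_combination (-1:ℂ)*h
    constructor
    · have h2 := congrArg Complex.re key
      simp only [Complex.sub_re, Complex.mul_re, Complex.ofReal_re, Complex.ofReal_im,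
        zero_mul, mul_zero, sub_zero] at h2
      exact h2
    · have h2 := congrArg Complex.im key
      simp only [Complex.sub_im, Complex.mul_im, Complex.ofReal_re, Complex.ofReal_im,
        zero_mul, mul_zero, sub_zero, add_zero, zero_add] at h2
      exact h2
  -- energy density and its derivative
  have hEd : ∀ z ∈ Set.Icc a b, HasDerivWithinAt
      (fun z => ε^2 * ((φ' z).re^2 + (φ' z).im^2) + (V z - μ + 1) * ((φ z).re^2 + (φ z).im^2))
      (ε^2 * (2*(φ' z).re*(φ'' z).re + 2*(φ' z).im*(φ'' z).im)
        + (V' z * ((φ z).re^2 + (φ z).im^2)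
          + (V z - μ + 1) * (2*(φ z).re*(φ' z).re + 2*(φ z).im*(φ' z).im)))
      (Set.Icc a b) z := by
    intro z hz
    exact ((dnsq hφ' z hz).const_mul (ε^2)).add
      ((((hV z hz).sub_const μ).add_const 1).mul (dnsq hφ z hz))
  have hEb : ∀ z ∈ Set.Icc a b,
      |ε^2 * (2*(φ' z).re*(φ'' z).re + 2*(φ' z).im*(φ'' z).im)
        + (V' z * ((φ z).re^2 + (φ z).im^2)
          + (V z - μ + 1) * (2*(φ z).re*(φ' z).re + 2*(φ z).im*(φ' z).im))|
      ≤ (D/ε) * (ε^2 * ((φ' z).re^2 + (φ' z).im^2)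
          + (V z - μ + 1) * ((φ z).re^2 + (φ z).im^2)) := by
    intro z hz
    obtain ⟨keyre, keyim⟩ := hkey z hz
    have erw : ε^2 * (2*(φ' z).re*(φ'' z).re + 2*(φ' z).im*(φ'' z).im)
        + (V' z * ((φ z).re^2 + (φ z).im^2)
          + (V z - μ + 1) * (2*(φ z).re*(φ' z).re + 2*(φ z).im*(φ' z).im))
        = 2*(V z-μ+ε*q z)*((φ z).re*(φ' z).re+(φ z).im*(φ' z).im)
          - 2*ε^2*(R' z/R z)*((φ' z).re^2+(φ' z).im^2)
          + (V' z*((φ z).re^2+(φ z).im^2)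
            + (V z-μ+1)*(2*(φ z).re*(φ' z).re+2*(φ z).im*(φ' z).im)) := by
      linear_combination (2*(φ' z).re)*keyre + (2*(φ' z).im)*keyim
    rw [erw, hD']
    have hρz : |R' z / R z| ≤ β := by
      have hRz0 : (0:ℝ) < R z := lt_of_lt_of_le hr₀ (hRpos z hz)
      rw [abs_div, abs_of_pos hRz0, hβ']
      exact div_le_div₀ (by exact hMR0) (hMR z hz) hr₀ (hRpos z hz)
    exact bnd ε c₀ C₁ β γ MV MQ (V z) (V' z) (R' z / R z) (q z) μ
      (φ z).re (φ z).im (φ' z).re (φ' z).im hε0 hε1 hc₀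
      (hVbnd z hz).1 (hVbnd z hz).2 (hMQb z hz) hρz (hMVb z hz) hγc hγ0
  have hEp : ∀ z ∈ Set.Icc a b,
      0 ≤ ε^2 * ((φ' z).re^2 + (φ' z).im^2)
        + (V z - μ + 1) * ((φ z).re^2 + (φ z).im^2) := by
    intro z hz
    have h1 := (hVbnd z hz).1
    have : 0 ≤ V z - μ + 1 := by linarith
    positivity
  have hgron := gron_two hEd hEb hEp s hs t ht
  have hnorm : ∀ w : ℂ, ‖w‖^2 = w.re^2 + w.im^2 := by
    intro w
    rw [Complex.sq_norm, Complex.normSq_apply]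
    ring
  rw [hnorm (φ' s), hnorm (φ s), hnorm (φ' t), hnorm (φ t)]
  exact hgron
end

section
/- Let f : ℝⁿ → ℝ be continuously differentiable with ∇f bounded and Lipschitz, and let (φ_t)_{t∈ℝ} be the globally defined flow of ∇f. For x, y ∈ ℝⁿ and t > 0, let U_t(x,y) denote the set of Lipschitz paths γ : [0,t] → ℝⁿ with γ(0) = x and γ(t) = y, and define d_{∇f}(x,y,t) := (1/4) · inf{ ∫₀^t |γ'(s) − ∇f(γ(s))|² ds : γ ∈ U_t(x,y) }. Let K ⊆ ℝⁿ be compact, T > 0, and y₀ ∈ ℝⁿ be such that φ_t(x) ≠ y₀ for every x ∈ K and every t ∈ [0,T]. Then inf{ d_{∇f}(x,y₀,t) : x ∈ K, t ∈ (0,T] } > 0. -/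
open MeasureTheory Filter intervalIntegral

/-- The cost `d_{∇f}(x,y,t)`: infimum of `(1/4)∫₀ᵗ |γ'(s) − ∇f(γ(s))|² ds` over
Lipschitz paths from `x` to `y` in time `t`. -/
noncomputable def dGrad18 (n : ℕ) (f : EuclideanSpace ℝ (Fin n) → ℝ)
    (x y : EuclideanSpace ℝ (Fin n)) (t : ℝ) : ℝ :=
  (1/4) * sInf { I : ℝ | ∃ γ : ℝ → EuclideanSpace ℝ (Fin n),
      (∃ K, LipschitzWith K γ) ∧ γ 0 = x ∧ γ t = y ∧
      I = ∫ s in (0:ℝ)..t, ‖deriv γ s - gradient f (γ s)‖^2 }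

theorem lipschitz_ftc18 {E : Type*} [NormedAddCommGroup E] [NormedSpace ℝ E]
    [FiniteDimensional ℝ E] {γ : ℝ → E} {Kg : NNReal} (hγ : LipschitzWith Kg γ)
    {a b : ℝ} (hab : a ≤ b) :
    ∫ s in a..b, deriv γ s = γ b - γ a := by
  have hcont : Continuous γ := hγ.continuous
  set h : ℕ → ℝ := fun n => ((n : ℝ) + 1)⁻¹ with hh
  have hpos : ∀ n, 0 < h n := fun n => by positivity
  have htend : Tendsto h atTop (nhds 0) := by
    simpa [hh, one_div] using tendsto_one_div_add_atTop_nhds_zero_nat (𝕜 := ℝ)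
  set g : ℕ → ℝ → E := fun n s => (h n)⁻¹ • (γ (s + h n) - γ s) with hgdef
  -- norm bound for γ increments
  have hinc : ∀ (s : ℝ) (n : ℕ), ‖γ (s + h n) - γ s‖ ≤ (Kg : ℝ) * h n := by
    intro s n
    have := hγ.dist_le_mul (s + h n) s
    simpa [dist_eq_norm, abs_of_pos (hpos n)] using this
  have hgbound : ∀ n s, ‖g n s‖ ≤ (Kg : ℝ) := by
    intro n s
    have e1 : ‖g n s‖ = ‖(h n)⁻¹‖ * ‖γ (s + h n) - γ s‖ := norm_smul _ _
    rw [e1, Real.norm_eq_abs, abs_of_pos (inv_pos.2 (hpos n))]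
    calc (h n)⁻¹ * ‖γ (s + h n) - γ s‖ ≤ (h n)⁻¹ * ((Kg : ℝ) * h n) :=
          mul_le_mul_of_nonneg_left (hinc s n) (inv_pos.2 (hpos n)).le
      _ = (Kg : ℝ) := by rw [mul_comm, mul_assoc, mul_inv_cancel₀ (hpos n).ne', mul_one]
  -- a.e. convergence
  have hae : ∀ᵐ s : ℝ, Tendsto (fun n => g n s) atTop (nhds (deriv γ s)) := by
    filter_upwards [hγ.ae_differentiableAt] with s hs
    have hd := hs.hasDerivAt
    rw [hasDerivAt_iff_tendsto_slope] at hd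
    have hts : Tendsto (fun n => s + h n) atTop (nhdsWithin s {s}ᶜ) := by
      apply tendsto_nhdsWithin_of_tendsto_nhds_of_eventually_within
      · simpa using (tendsto_const_nhds.add htend)
      · filter_upwards with n
        simp [Set.mem_compl_iff, (hpos n).ne']
    have := hd.comp hts
    convert this using 2 with n
    simp [hgdef, slope_def_module]
  -- dominated convergence on Ioc a b
  have hIoc : Tendsto (fun n => ∫ s in Set.Ioc a b, g n s) atTop
      (nhds (∫ s in Set.Ioc a b, deriv γ s)) := by
    apply tendsto_integral_of_dominated_convergence (fun _ => (Kg : ℝ))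
    · intro n
      exact ((hcont.comp (continuous_id.add continuous_const)).sub hcont).const_smul _
        |>.aestronglyMeasurable
    · exact integrableOn_const measure_Ioc_lt_top.ne
    · intro n
      filter_upwards with s using hgbound n s
    · exact ae_restrict_of_ae hae
  -- compute the integral of g n
  have key : ∀ n, ∫ s in a..b, g n s =
      (h n)⁻¹ • ((∫ s in b..(b + h n), γ s) - ∫ s in a..(a + h n), γ s) := by
    intro n
    have hint : ∀ c d : ℝ, IntervalIntegrable γ volume c d := fun c d =>
      hcont.intervalIntegrable c d
    have h1 : ∫ s in a..b, γ (s + h n) = ∫ s in (a + h n)..(b + h n), γ s :=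
      integral_comp_add_right γ (h n)
    have h2 : (∫ s in (a + h n)..b, γ s) + ∫ s in b..(b + h n), γ s
        = ∫ s in (a + h n)..(b + h n), γ s :=
      integral_add_adjacent_intervals (hint _ _) (hint _ _)
    have h3 : (∫ s in a..(a + h n), γ s) + ∫ s in (a + h n)..b, γ s
        = ∫ s in a..b, γ s :=
      integral_add_adjacent_intervals (hint _ _) (hint _ _)
    have h4 : ∫ s in a..b, g n s
        = (h n)⁻¹ • ((∫ s in a..b, γ (s + h n)) - ∫ s in a..b, γ s) := by
      have hintc : IntervalIntegrable (fun s : ℝ => γ (s + h n)) volume a b :=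
        (hcont.comp (continuous_id.add continuous_const)).intervalIntegrable a b
      rw [← integral_sub hintc (hint a b), ← intervalIntegral.integral_smul]
    rw [h4, h1, ← h2, ← h3]
    congr 1
    abel
  -- limit of averages
  have havg : ∀ c : ℝ, Tendsto (fun n => (h n)⁻¹ • ∫ s in c..(c + h n), γ s) atTop
      (nhds (γ c)) := by
    intro c
    rw [tendsto_iff_norm_sub_tendsto_zero]
    apply squeeze_zero (fun n => norm_nonneg _) _ (by
      simpa using htend.const_mul (Kg : ℝ))
    intro n
    have hconst : ∫ s in c..(c + h n), γ c = (h n) • γ c := by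
      simp
    have : (h n)⁻¹ • (∫ s in c..(c + h n), γ s) - γ c
        = (h n)⁻¹ • ((∫ s in c..(c + h n), γ s) - ∫ s in c..(c + h n), γ c) := by
      rw [hconst, smul_sub, smul_smul, inv_mul_cancel₀ (hpos n).ne', one_smul]
    rw [this]
    have hb : ‖(∫ s in c..(c + h n), γ s) - ∫ s in c..(c + h n), γ c‖
        ≤ (Kg : ℝ) * h n * |c + h n - c| := by
      rw [← integral_sub (hcont.intervalIntegrable _ _) (continuous_const.intervalIntegrable _ _)]
      apply intervalIntegral.norm_integral_le_of_norm_le_const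
      intro s hs
      rw [Set.uIoc_of_le (by linarith [hpos n])] at hs
      have := hγ.dist_le_mul s c
      rw [dist_eq_norm, dist_eq_norm] at this
      calc ‖γ s - γ c‖ ≤ (Kg : ℝ) * ‖s - c‖ := this
        _ ≤ (Kg : ℝ) * h n := by
            gcongr
            rw [Real.norm_eq_abs, abs_of_nonneg (by linarith [hs.1.le])]
            linarith [hs.2]
    calc ‖(h n)⁻¹ • ((∫ s in c..(c + h n), γ s) - ∫ s in c..(c + h n), γ c)‖
        = (h n)⁻¹ * ‖(∫ s in c..(c + h n), γ s) - ∫ s in c..(c + h n), γ c‖ := by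
          rw [norm_smul, Real.norm_eq_abs, abs_of_pos (inv_pos.2 (hpos n))]
      _ ≤ (h n)⁻¹ * ((Kg : ℝ) * h n * |c + h n - c|) :=
          mul_le_mul_of_nonneg_left hb (inv_pos.2 (hpos n)).le
      _ = (Kg : ℝ) * h n := by
          rw [add_sub_cancel_left, abs_of_pos (hpos n)]
          field_simp
  -- combine
  have hlim2 : Tendsto (fun n => ∫ s in a..b, g n s) atTop (nhds (γ b - γ a)) := by
    have := (havg b).sub (havg a)
    apply this.congr'
    filter_upwards with n
    rw [key n, smul_sub]
  have hlim1 : Tendsto (fun n => ∫ s in a..b, g n s) atTop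
      (nhds (∫ s in a..b, deriv γ s)) := by
    simpa only [intervalIntegral.integral_of_le hab] using hIoc
  exact tendsto_nhds_unique hlim1 hlim2

set_option maxHeartbeats 1000000 in
/-- Geometric part of Proposition 1.12 (Euclidean form): if no point of the compact
set `K` reaches `y₀` along the gradient flow of `f` in time at most `T`, then the
cost `d_{∇f}(x,y₀,t)` is uniformly bounded below by a positive constant for `x ∈ K`
and `t ∈ (0,T]`. -/
theorem stmt18 (n : ℕ) (f : EuclideanSpace ℝ (Fin n) → ℝ)
    (hf : ContDiff ℝ 1 f) (hbdd : ∃ C, ∀ z, ‖gradient f z‖ ≤ C)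
    (hlip : ∃ Kl, LipschitzWith Kl (gradient f))
    (φ : ℝ → EuclideanSpace ℝ (Fin n) → EuclideanSpace ℝ (Fin n))
    (hφ0 : ∀ x, φ 0 x = x)
    (hφ : ∀ (t : ℝ) (x : EuclideanSpace ℝ (Fin n)),
      HasDerivAt (fun s => φ s x) (gradient f (φ t x)) t)
    (K : Set (EuclideanSpace ℝ (Fin n))) (hK : IsCompact K)
    (T : ℝ) (hT : 0 < T) (y₀ : EuclideanSpace ℝ (Fin n))
    (hmiss : ∀ x ∈ K, ∀ t ∈ Set.Icc (0:ℝ) T, φ t x ≠ y₀) :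
    ∃ m > 0, ∀ x ∈ K, ∀ t ∈ Set.Ioc (0:ℝ) T, m ≤ dGrad18 n f x y₀ t := by
  obtain ⟨C₀, hC₀⟩ := hbdd
  obtain ⟨Kl, hKl⟩ := hlip
  rcases K.eq_empty_or_nonempty with rfl | hKne
  · exact ⟨1, one_pos, fun x hx => absurd hx (Set.notMem_empty x)⟩
  set C : ℝ := max C₀ 0 with hCdef
  have hC : ∀ z, ‖gradient f z‖ ≤ C := fun z => (hC₀ z).trans (le_max_left _ _)
  have hCnn : 0 ≤ C := le_max_right _ _
  set L : ℝ := (Kl : ℝ) + 1 with hLdef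
  have hLpos : (0:ℝ) < L := by positivity
  have hgrad_lip : ∀ a b, ‖gradient f a - gradient f b‖ ≤ L * ‖a - b‖ := by
    intro a b
    have h1 := hKl.dist_le_mul a b
    rw [dist_eq_norm, dist_eq_norm] at h1
    have h2 : (Kl : ℝ) * ‖a - b‖ ≤ L * ‖a - b‖ :=
      mul_le_mul_of_nonneg_right (by rw [hLdef]; linarith) (norm_nonneg _)
    linarith
  have hψc : ∀ x, Continuous (fun s => φ s x) := fun x =>
    continuous_iff_continuousAt.2 fun s => (hφ s x).continuousAt
  have hgc : Continuous (gradient f) := hKl.continuous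
  -- the flow is Lipschitz in time
  have hφs_lip : ∀ x, LipschitzWith (Real.toNNReal C) (fun s => φ s x) := by
    intro x
    apply lipschitzWith_of_nnnorm_deriv_le (fun s => (hφ s x).differentiableAt)
    intro s
    rw [(hφ s x).deriv, ← NNReal.coe_le_coe, coe_nnnorm, Real.coe_toNNReal C hCnn]
    exact hC _
  -- the flow is Lipschitz in space on [0, T]
  have hflow_x : ∀ x x' : EuclideanSpace ℝ (Fin n), ∀ s ∈ Set.Icc (0:ℝ) T,
      dist (φ s x) (φ s x') ≤ dist x x' * Real.exp (Kl * s) := by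
    intro x x' s hs
    have h := dist_le_of_trajectories_ODE (v := fun _ z => gradient f z) (K := Kl)
      (fun _ => hKl) ((hψc x).continuousOn) (fun u _ => (hφ u x).hasDerivWithinAt)
      ((hψc x').continuousOn) (fun u _ => (hφ u x').hasDerivWithinAt)
      (le_of_eq (by rw [hφ0, hφ0])) s hs
    simpa using h
  -- compact image of flow and positive distance to y₀
  set Φ : ℝ × EuclideanSpace ℝ (Fin n) → EuclideanSpace ℝ (Fin n) :=
    fun p => φ p.1 p.2 with hΦdef
  have hM : (0:ℝ) ≤ C + Real.exp (Kl * T) := by positivity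
  have hΦlip : LipschitzOnWith (Real.toNNReal (C + Real.exp (Kl * T))) Φ
      (Set.Icc (0:ℝ) T ×ˢ Set.univ) := by
    rw [lipschitzOnWith_iff_dist_le_mul]
    rintro ⟨s, x⟩ ⟨hs, -⟩ ⟨s', x'⟩ ⟨hs', -⟩
    have h1 : dist (φ s x) (φ s' x) ≤ C * dist s s' := by
      have h := (hφs_lip x).dist_le_mul s s'
      rwa [Real.coe_toNNReal C hCnn] at h
    have h2 : dist (φ s' x) (φ s' x') ≤ dist x x' * Real.exp (Kl * T) := by
      refine (hflow_x x x' s' hs').trans ?_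
      have : Real.exp ((Kl:ℝ) * s') ≤ Real.exp ((Kl:ℝ) * T) :=
        Real.exp_le_exp.2 (mul_le_mul_of_nonneg_left hs'.2 Kl.coe_nonneg)
      exact mul_le_mul_of_nonneg_left this dist_nonneg
    have e1 : dist s s' ≤ dist ((s, x) : ℝ × EuclideanSpace ℝ (Fin n)) (s', x') :=
      le_max_left _ _
    have e2 : dist x x' ≤ dist ((s, x) : ℝ × EuclideanSpace ℝ (Fin n)) (s', x') :=
      le_max_right _ _
    have e3 : (0:ℝ) ≤ dist ((s, x) : ℝ × EuclideanSpace ℝ (Fin n)) (s', x') := dist_nonneg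
    rw [Real.coe_toNNReal _ hM]
    calc dist (Φ (s, x)) (Φ (s', x'))
        ≤ dist (φ s x) (φ s' x) + dist (φ s' x) (φ s' x') := dist_triangle _ _ _
      _ ≤ C * dist s s' + dist x x' * Real.exp (Kl * T) := add_le_add h1 h2
      _ ≤ (C + Real.exp (Kl * T)) * dist ((s, x) : ℝ × EuclideanSpace ℝ (Fin n)) (s', x') := by
          nlinarith [Real.exp_pos ((Kl:ℝ) * T), mul_le_mul_of_nonneg_left e1 hCnn,
            mul_le_mul_of_nonneg_left e2 (Real.exp_pos ((Kl:ℝ) * T)).le]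
  set S : Set (EuclideanSpace ℝ (Fin n)) := Φ '' (Set.Icc (0:ℝ) T ×ˢ K) with hSdef
  have hScompact : IsCompact S :=
    (isCompact_Icc.prod hK).image_of_continuousOn
      (hΦlip.continuousOn.mono (Set.prod_mono_right (Set.subset_univ K)))
  have hSne : S.Nonempty := by
    obtain ⟨x₀, hx₀⟩ := hKne
    exact ⟨Φ (0, x₀), ⟨(0, x₀), ⟨⟨le_rfl, hT.le⟩, hx₀⟩, rfl⟩⟩
  have hy₀S : y₀ ∉ S := by
    rintro ⟨⟨s, x⟩, ⟨hs, hx⟩, h⟩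
    exact hmiss x hx s hs h
  set δ : ℝ := Metric.infDist y₀ S with hδdef
  have hδpos : 0 < δ := (hScompact.isClosed.notMem_iff_infDist_pos hSne).1 hy₀S
  have hδle : ∀ x ∈ K, ∀ s ∈ Set.Icc (0:ℝ) T, δ ≤ ‖y₀ - φ s x‖ := by
    intro x hx s hs
    have hmem : φ s x ∈ S := ⟨(s, x), ⟨hs, hx⟩, rfl⟩
    calc δ ≤ dist y₀ (φ s x) := Metric.infDist_le_dist_of_mem hmem
      _ = ‖y₀ - φ s x‖ := dist_eq_norm _ _
  set lam : ℝ := δ * Real.exp (-(L * T)) / T with hlamdef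
  have hlam : 0 < lam := by positivity
  refine ⟨lam * δ * Real.exp (-(L * T)) / 4, by positivity, ?_⟩
  intro x hx t ht
  rw [dGrad18]
  have hsInf : lam * δ * Real.exp (-(L * T)) ≤ sInf { I : ℝ |
      ∃ γ : ℝ → EuclideanSpace ℝ (Fin n), (∃ Kc, LipschitzWith Kc γ) ∧ γ 0 = x ∧ γ t = y₀ ∧
      I = ∫ s in (0:ℝ)..t, ‖deriv γ s - gradient f (γ s)‖^2 } := by
    apply le_csInf
    · -- nonempty: straight line
      set v : EuclideanSpace ℝ (Fin n) := t⁻¹ • (y₀ - x) with hv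
      refine ⟨_, fun s => x + s • v, ⟨‖v‖₊, ?_⟩, by simp, ?_, rfl⟩
      · apply LipschitzWith.of_dist_le_mul
        intro a b
        rw [dist_eq_norm, dist_eq_norm]
        have : x + a • v - (x + b • v) = (a - b) • v := by
          rw [sub_smul]; abel
        rw [this, norm_smul, coe_nnnorm, Real.norm_eq_abs]
        exact le_of_eq (mul_comm _ _)
      · show x + t • v = y₀
        rw [hv, smul_smul, mul_inv_cancel₀ ht.1.ne', one_smul]
        abel
    · rintro I ⟨γ, ⟨Kg, hKg⟩, hγ0, hγt, rfl⟩
      have hγcont : Continuous γ := hKg.continuous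
      have hψcont : Continuous (fun s => φ s x) := hψc x
      set hfun : ℝ → EuclideanSpace ℝ (Fin n) :=
        fun s => deriv γ s - gradient f (γ s) with hhfun
      have hmeas : AEStronglyMeasurable hfun volume :=
        ((stronglyMeasurable_deriv γ).sub
          ((hgc.comp hγcont).stronglyMeasurable)).aestronglyMeasurable
      have hKgC : ∀ s, ‖deriv γ s‖ ≤ (Kg : ℝ) := by
        intro s
        by_cases hd : DifferentiableAt ℝ γ s
        · exact hd.hasDerivAt.le_of_lipschitz hKg
        · simp [deriv_zero_of_not_differentiableAt hd]
      have hbfun : ∀ s, ‖hfun s‖ ≤ (Kg : ℝ) + C := fun s =>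
        (norm_sub_le _ _).trans (add_le_add (hKgC s) (hC _))
      have hint_h : ∀ c d : ℝ, IntervalIntegrable hfun volume c d := by
        intro c d
        rw [intervalIntegrable_iff]
        refine (integrableOn_const ?_).mono' hmeas.restrict
          (Filter.Eventually.of_forall fun s => hbfun s)
        exact measure_Ioc_lt_top.ne
      have hint_d : ∀ c d : ℝ, IntervalIntegrable (deriv γ) volume c d := by
        intro c d
        rw [intervalIntegrable_iff]
        refine (integrableOn_const ?_).mono'
          (stronglyMeasurable_deriv γ).aestronglyMeasurable.restrict
          (Filter.Eventually.of_forall fun s => hKgC s)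
        exact measure_Ioc_lt_top.ne
      have hmeas2 : AEStronglyMeasurable (fun s => ‖hfun s‖^2) volume := by
        have h1 : AEMeasurable (fun s => ‖hfun s‖) volume := hmeas.norm.aemeasurable
        exact (h1.pow_const 2).aestronglyMeasurable
      have hint_sq : ∀ c d : ℝ, IntervalIntegrable (fun s => ‖hfun s‖^2) volume c d := by
        intro c d
        rw [intervalIntegrable_iff]
        have hbd2 : ∀ s : ℝ, ‖(‖hfun s‖^2 : ℝ)‖ ≤ ((Kg:ℝ) + C)^2 := by
          intro s
          rw [Real.norm_eq_abs, abs_of_nonneg (by positivity)]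
          have := hbfun s
          have h0 : (0:ℝ) ≤ ‖hfun s‖ := norm_nonneg _
          nlinarith
        exact (integrableOn_const measure_Ioc_lt_top.ne).mono' hmeas2.restrict
          (Filter.Eventually.of_forall hbd2)
      have hcont2 : Continuous (fun u => gradient f (γ u) - gradient f (φ u x)) :=
        (hgc.comp hγcont).sub (hgc.comp hψcont)
      have hcont3 : Continuous (fun u => gradient f (φ u x)) := hgc.comp hψcont
      set I : ℝ := ∫ s in (0:ℝ)..t, ‖hfun s‖^2 with hI
      have hInonneg : 0 ≤ I :=
        intervalIntegral.integral_nonneg ht.1.le (fun u _ => by positivity)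
      -- the difference identity
      have hdiff_eq : ∀ s : ℝ, 0 ≤ s → γ s - φ s x =
          (∫ u in (0:ℝ)..s, hfun u) +
            ∫ u in (0:ℝ)..s, (gradient f (γ u) - gradient f (φ u x)) := by
        intro s hs
        have e1 : ∫ u in (0:ℝ)..s, deriv γ u = γ s - x := by
          rw [lipschitz_ftc18 hKg hs, hγ0]
        have e2 : ∫ u in (0:ℝ)..s, gradient f (φ u x) = φ s x - x := by
          rw [intervalIntegral.integral_eq_sub_of_hasDerivAt (fun u _ => hφ u x)
            (hcont3.intervalIntegrable 0 s)]
          simp [hφ0]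
        have e3 : (∫ u in (0:ℝ)..s, hfun u) +
            ∫ u in (0:ℝ)..s, (gradient f (γ u) - gradient f (φ u x))
            = (∫ u in (0:ℝ)..s, deriv γ u) - ∫ u in (0:ℝ)..s, gradient f (φ u x) := by
          rw [← intervalIntegral.integral_add (hint_h 0 s)
            (hcont2.intervalIntegrable 0 s),
            ← intervalIntegral.integral_sub (hint_d 0 s)
            (hcont3.intervalIntegrable 0 s)]
          congr 1
          funext u
          simp only [hhfun]
          abel
        rw [e3, e1, e2]
        abel
      set w : ℝ → ℝ := fun s => ‖γ s - φ s x‖ with hw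
      have hwc : Continuous w := (hγcont.sub hψcont).norm
      set G : ℝ → ℝ := fun s => ∫ u in (0:ℝ)..s, w u with hG
      have hGd : ∀ s, HasDerivAt G (w s) s := fun s =>
        (hwc.integral_hasStrictDerivAt 0 s).hasDerivAt
      have hGnonneg : ∀ s, 0 ≤ s → 0 ≤ G s := fun s hs =>
        intervalIntegral.integral_nonneg hs (fun u _ => norm_nonneg _)
      set aa : ℝ := lam * T / 2 + I / (2 * lam) with haadef
      have haa : 0 ≤ aa := by positivity
      have hw_le : ∀ s ∈ Set.Icc (0:ℝ) t, w s ≤ aa + L * G s := by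
        intro s hs
        have hs0 : (0:ℝ) ≤ s := hs.1
        have e := hdiff_eq s hs0
        have step1 : w s ≤ (∫ u in (0:ℝ)..s, ‖hfun u‖) +
            ∫ u in (0:ℝ)..s, ‖gradient f (γ u) - gradient f (φ u x)‖ := by
          calc w s = ‖γ s - φ s x‖ := rfl
            _ ≤ ‖∫ u in (0:ℝ)..s, hfun u‖ +
                ‖∫ u in (0:ℝ)..s, (gradient f (γ u) - gradient f (φ u x))‖ := by
                rw [e]; exact norm_add_le _ _
            _ ≤ _ := add_le_add (intervalIntegral.norm_integral_le_integral_norm hs0)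
                (intervalIntegral.norm_integral_le_integral_norm hs0)
        have b1 : (∫ u in (0:ℝ)..s, ‖hfun u‖) ≤ aa := by
          have p1 : ∀ u : ℝ, ‖hfun u‖ ≤ lam / 2 + ‖hfun u‖^2 / (2 * lam) := by
            intro u
            have h2 : (0:ℝ) < 2 * lam := by positivity
            have key : lam / 2 + ‖hfun u‖^2 / (2 * lam) - ‖hfun u‖
                = (‖hfun u‖ - lam)^2 / (2 * lam) := by
              field_simp
              ring
            have h3 : 0 ≤ (‖hfun u‖ - lam)^2 / (2 * lam) :=
              div_nonneg (sq_nonneg _) h2.le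
            linarith [key]
          have q1 : (∫ u in (0:ℝ)..s, ‖hfun u‖)
              ≤ ∫ u in (0:ℝ)..s, (lam / 2 + ‖hfun u‖^2 / (2 * lam)) := by
            apply intervalIntegral.integral_mono_on hs0 ((hint_h 0 s).norm)
            · exact intervalIntegrable_const.add ((hint_sq 0 s).div_const _)
            · exact fun u _ => p1 u
          have q2 : (∫ u in (0:ℝ)..s, (lam / 2 + ‖hfun u‖^2 / (2 * lam)))
              = lam / 2 * s + (∫ u in (0:ℝ)..s, ‖hfun u‖^2) / (2 * lam) := by
            rw [intervalIntegral.integral_add intervalIntegrable_const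
              ((hint_sq 0 s).div_const _), intervalIntegral.integral_const,
              intervalIntegral.integral_div]
            simp [mul_comm]
          have q3 : (∫ u in (0:ℝ)..s, ‖hfun u‖^2) ≤ I := by
            rw [hI]
            apply intervalIntegral.integral_mono_interval le_rfl hs0
              (hs.2) _ (hint_sq 0 t)
            exact Filter.Eventually.of_forall fun u => by positivity
          have q4 : lam / 2 * s ≤ lam * T / 2 := by
            have : s ≤ T := hs.2.trans ht.2
            nlinarith
          have q5 : (∫ u in (0:ℝ)..s, ‖hfun u‖^2) / (2 * lam) ≤ I / (2 * lam) :=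
            div_le_div_of_nonneg_right q3 (by positivity) |>.trans_eq rfl
          calc (∫ u in (0:ℝ)..s, ‖hfun u‖) ≤ _ := q1
            _ = lam / 2 * s + (∫ u in (0:ℝ)..s, ‖hfun u‖^2) / (2 * lam) := q2
            _ ≤ aa := by rw [haadef]; exact add_le_add q4 q5
        have b2 : (∫ u in (0:ℝ)..s, ‖gradient f (γ u) - gradient f (φ u x)‖) ≤ L * G s := by
          have q1 : (∫ u in (0:ℝ)..s, ‖gradient f (γ u) - gradient f (φ u x)‖)
              ≤ ∫ u in (0:ℝ)..s, L * w u := by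
            apply intervalIntegral.integral_mono_on hs0
            · exact hcont2.norm.intervalIntegrable 0 s
            · exact (hwc.const_smul L).intervalIntegrable 0 s
            · intro u _
              exact hgrad_lip (γ u) (φ u x)
          rw [intervalIntegral.integral_const_mul] at q1
          exact q1
        linarith
      -- Gronwall
      have hGb := norm_le_gronwallBound_of_norm_deriv_right_le (f := G) (f' := w)
        (δ := 0) (K := L) (ε := aa) (a := 0) (b := t)
        (fun s _ => (hGd s).continuousAt.continuousWithinAt)
        (fun s _ => (hGd s).hasDerivWithinAt)
        (by simp [hG])
        (fun s hs => by
          rw [Real.norm_eq_abs, Real.norm_eq_abs, abs_of_nonneg (norm_nonneg _),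
            abs_of_nonneg (hGnonneg s hs.1)]
          have := hw_le s ⟨hs.1, hs.2.le⟩
          linarith)
        t ⟨ht.1.le, le_rfl⟩
      rw [gronwallBound_of_K_ne_0 hLpos.ne'] at hGb
      have hGt : G t ≤ aa / L * (Real.exp (L * t) - 1) := by
        have h1 : |G t| ≤ 0 * Real.exp (L * (t - 0)) + aa / L * (Real.exp (L * (t - 0)) - 1) := hGb
        rw [abs_of_nonneg (hGnonneg t ht.1.le)] at h1
        simpa using h1
      have hwt : w t ≤ aa * Real.exp (L * t) := by
        have h1 := hw_le t ⟨ht.1.le, le_rfl⟩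
        have h3 : aa + L * (aa / L * (Real.exp (L * t) - 1)) = aa * Real.exp (L * t) := by
          field_simp
          ring
        have h2 : L * G t ≤ L * (aa / L * (Real.exp (L * t) - 1)) :=
          mul_le_mul_of_nonneg_left hGt hLpos.le
        calc w t ≤ aa + L * G t := h1
          _ ≤ aa + L * (aa / L * (Real.exp (L * t) - 1)) := add_le_add_right h2 aa
          _ = aa * Real.exp (L * t) := h3
      have hδwt : δ ≤ w t := by
        have hwte : w t = ‖y₀ - φ t x‖ := by
          show ‖γ t - φ t x‖ = ‖y₀ - φ t x‖
          rw [hγt]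
        rw [hwte]
        exact hδle x hx t ⟨ht.1.le, ht.2⟩
      have hexp : Real.exp (L * t) ≤ Real.exp (L * T) :=
        Real.exp_le_exp.2 (mul_le_mul_of_nonneg_left ht.2 hLpos.le)
      have h4 : δ ≤ aa * Real.exp (L * T) :=
        hδwt.trans (hwt.trans (mul_le_mul_of_nonneg_left hexp haa))
      have final : δ * Real.exp (-(L * T)) ≤ aa := by
        calc δ * Real.exp (-(L * T))
            ≤ (aa * Real.exp (L * T)) * Real.exp (-(L * T)) :=
              mul_le_mul_of_nonneg_right h4 (Real.exp_pos _).le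
          _ = aa := by rw [mul_assoc, ← Real.exp_add]; simp
      have hlamT : lam * T / 2 = δ * Real.exp (-(L * T)) / 2 := by
        rw [hlamdef]
        field_simp
      have h5 : δ * Real.exp (-(L * T)) / 2 ≤ I / (2 * lam) := by
        rw [haadef] at final
        linarith [hlamT ▸ final]
      have h6 := (div_le_div_iff₀ (by norm_num : (0:ℝ) < 2) (by positivity : (0:ℝ) < 2 * lam)).1 h5
      nlinarith [h6]
  linarith
end
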